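/- Let each f_i be convex and differentiable, and let (w^*, s^*) be a global minimizer of g(w,s) = (1/n) Σ_i [s_i + c (f_i(w) - s_i)₊] with c > 0. Then necessarily c ≥ 1, s_i^* ≤ f_i(w^*) for all i, w^* is a global minimizer of f = (1/n) Σ f_i, and g(w^*, s^*) = f(w^*). -/

import Mathlib

open RealInnerProductSpace

/-- If (w*, s*) is a global minimizer of the penalty function g with c > 0, then
c ≥ 1, sᵢ* ≤ fᵢ(w*) for all i, w* is a global minimizer of f, and g(w*,s*) = f(w*). -/
theorem stmt_10 (d n : ℕ) (hn : 0 < n)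
    (f : Fin n → EuclideanSpace ℝ (Fin d) → ℝ)
    (hconv : ∀ i, ConvexOn ℝ Set.univ (f i))
    (hdiff : ∀ i, Differentiable ℝ (f i))
    (c : ℝ) (hc : 0 < c)
    (g : EuclideanSpace ℝ (Fin d) → (Fin n → ℝ) → ℝ)
    (hg : ∀ w s, g w s = (1 / (n : ℝ)) * ∑ i, (s i + c * max (f i w - s i) 0))
    (wstar : EuclideanSpace ℝ (Fin d)) (sstar : Fin n → ℝ)
    (hmin : ∀ w s, g wstar sstar ≤ g w s) :
    1 ≤ c ∧ (∀ i, sstar i ≤ f i wstar) ∧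
      (∀ w, (1 / (n : ℝ)) * ∑ i, f i wstar ≤ (1 / (n : ℝ)) * ∑ i, f i w) ∧
      g wstar sstar = (1 / (n : ℝ)) * ∑ i, f i wstar := by
  haveI : Nonempty (Fin n) := ⟨⟨0, hn⟩⟩
  have hn0 : (0 : ℝ) < (n : ℝ) := by exact_mod_cast hn
  have hinv : (0 : ℝ) < 1 / (n : ℝ) := by positivity
  -- Step 1: c ≥ 1
  have hc1 : 1 ≤ c := by
    by_contra h
    push_neg at h
    have h1c : (0 : ℝ) < 1 - c := by linarith
    set G := g wstar sstar with hG
    set A := (1 / (n : ℝ)) * ∑ i, c * f i wstar with hA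
    set t : ℝ := min (Finset.univ.inf' Finset.univ_nonempty (fun i => f i wstar))
      ((G - A) / (1 - c) - 1) with ht
    have htle : ∀ i, t ≤ f i wstar := fun i =>
      le_trans (min_le_left _ _) (Finset.inf'_le _ (Finset.mem_univ i))
    have hce : g wstar (fun _ => t) = (1 - c) * t + A := by
      rw [hg]
      have : ∀ i : Fin n, t + c * max (f i wstar - t) 0 = (1 - c) * t + c * f i wstar := by
        intro i
        rw [max_eq_left (by linarith [htle i])]
        ring
      rw [Finset.sum_congr rfl (fun i _ => this i), Finset.sum_add_distrib,
        Finset.sum_const, Finset.card_univ, Fintype.card_fin, hA]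
      field_simp
      ring
    have hlt : g wstar (fun _ => t) < G := by
      rw [hce]
      have htlt : t < (G - A) / (1 - c) :=
        lt_of_le_of_lt (min_le_right _ _) (by linarith)
      have := (mul_lt_mul_iff_right₀ h1c).mpr htlt
      rw [mul_div_cancel₀ _ (ne_of_gt h1c)] at this
      linarith
    exact absurd (hmin wstar (fun _ => t)) (not_le.mpr hlt)
  -- Step 2: sstar i ≤ f i wstar
  have hs : ∀ i, sstar i ≤ f i wstar := by
    intro i
    by_contra h
    push_neg at h
    set s' : Fin n → ℝ := Function.update sstar i (f i wstar) with hs'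
    have hlt : g wstar s' < g wstar sstar := by
      rw [hg, hg]
      refine (mul_lt_mul_iff_right₀ hinv).mpr ?_
      refine Finset.sum_lt_sum (fun j _ => ?_) ⟨i, Finset.mem_univ i, ?_⟩
      · by_cases hji : j = i
        · subst hji
          simp only [hs', Function.update_self, sub_self, max_self]
          rw [max_eq_right (by linarith : f j wstar - sstar j ≤ 0)]
          linarith
        · rw [hs', Function.update_of_ne hji]
      · simp only [hs', Function.update_self]
        rw [sub_self, max_eq_right le_rfl, max_eq_right (by linarith)]
        linarith
    exact absurd (hmin wstar s') (not_le.mpr hlt)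
  -- Step 3: G = F
  have hGF : g wstar sstar = (1 / (n : ℝ)) * ∑ i, f i wstar := by
    have h2 : g wstar (fun i => f i wstar) = (1 / (n : ℝ)) * ∑ i, f i wstar := by
      rw [hg]; simp
    have hle : g wstar sstar ≤ (1 / (n : ℝ)) * ∑ i, f i wstar := h2 ▸ hmin wstar _
    have hge : (1 / (n : ℝ)) * ∑ i, f i wstar ≤ g wstar sstar := by
      rw [hg]
      refine (mul_le_mul_iff_right₀ hinv).mpr (Finset.sum_le_sum fun i _ => ?_)
      rw [max_eq_left (by linarith [hs i])]
      nlinarith [hs i]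
    linarith
  refine ⟨hc1, hs, fun w => ?_, hGF⟩
  have h2 : g w (fun i => f i w) = (1 / (n : ℝ)) * ∑ i, f i w := by
    rw [hg]; simp
  have := hmin w (fun i => f i w)
  rw [h2, hGF] at this
  exact this
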